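/- If z ∈ ℤ[i] is nonzero and φ(z) ≤ n, then min(|Re z|, |Im z|) ≤ w_{n-1} - 2^{v₂(z)+1}. -/

import Mathlib

open GaussianInt

noncomputable section

/-- The sequence w: w_{2k} = 3·2^k, w_{2k+1} = 4·2^k. -/
def w (n : ℕ) : ℤ := if n % 2 = 0 then 3 * 2 ^ (n / 2) else 4 * 2 ^ (n / 2)

/-- 2-adic valuation of gcd(Re z, Im z). -/
def v2 (z : GaussianInt) : ℕ := padicValNat 2 (Int.gcd z.re z.im)

/-- ℓ₁ norm. -/
def l1 (z : GaussianInt) : ℤ := |z.re| + |z.im|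

/-- ℓ∞ norm. -/
def linf (z : GaussianInt) : ℤ := max |z.re| |z.im|

/-- m(z) = min(|Re z|, |Im z|). -/
def mm (z : GaussianInt) : ℤ := min |z.re| |z.im|

/-- The algebraic norm. -/
def Nm (z : GaussianInt) : ℤ := z.re ^ 2 + z.im ^ 2

/-- Graves' formula for the minimal Euclidean function φ on ℤ[i]. -/
def phi (z : GaussianInt) : ℕ :=
  let j := v2 z
  let n := sInf {n : ℕ | |z.re| ≤ 2 ^ j * (w n - 2) ∧ |z.im| ≤ 2 ^ j * (w n - 2)}
  if l1 z ≤ 2 ^ j * (w (n + 1) - 3) then n + 2 * j else n + 2 * j + 1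

/-- Nearest integer, rounding halves down. -/
def nint (x : ℚ) : ℤ := if x - ⌊x⌋ ≤ 1 / 2 then ⌊x⌋ else ⌈x⌉

/-- Gauss quotient: coordinatewise nearest-integer rounding of a·conj(b)/Nm(b). -/
def gq (a b : GaussianInt) : GaussianInt :=
  ⟨nint (((a.re * b.re + a.im * b.im : ℤ) : ℚ) / ((b.re ^ 2 + b.im ^ 2 : ℤ) : ℚ)),
   nint (((a.im * b.re - a.re * b.im : ℤ) : ℚ) / ((b.re ^ 2 + b.im ^ 2 : ℤ) : ℚ))⟩

/-- Gauss remainder. -/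
def gr (a b : GaussianInt) : GaussianInt := a - gq a b * b

/-- The imaginary unit in ℤ[i]. -/
def Ii : GaussianInt := ⟨0, 1⟩

/-- The canonical unit u_z. -/
def uz (z : GaussianInt) : GaussianInt :=
  if |z.re| > |z.im| then (if 0 < z.re then 1 else -1)
  else if |z.im| > |z.re| then (if 0 < z.im then -Ii else Ii)
  else if 0 < z.re then (if 0 < z.im then 1 else Ii)
  else (if 0 < z.im then -Ii else -1)

/-- s(z) = sgn(Im(u_z·z)). -/
def sfun (z : GaussianInt) : ℤ := Int.sign ((uz z * z).im)



lemma two_pow_pos (k : ℕ) : (0:ℤ) < 2 ^ k := pow_pos (by norm_num) k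

lemma w_ge_3 (n : ℕ) : 3 ≤ w n := by
  have := two_pow_pos (n / 2)
  unfold w; split <;> nlinarith

lemma w_le_succ (n : ℕ) : w n ≤ w (n + 1) := by
  have := two_pow_pos (n / 2)
  unfold w
  rcases Nat.even_or_odd n with ⟨k, hk⟩ | ⟨k, hk⟩
  · have h1 : n % 2 = 0 := by omega
    have h2 : (n+1) % 2 = 1 := by omega
    have h3 : (n+1)/2 = n/2 := by omega
    rw [if_pos h1, if_neg (by omega : ¬ (n+1) % 2 = 0), h3]
    nlinarith
  · have h1 : n % 2 = 1 := by omega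
    have h2 : (n+1) % 2 = 0 := by omega
    have h3 : (n+1)/2 = n/2 + 1 := by omega
    rw [if_neg (by omega : ¬ n % 2 = 0), if_pos h2, h3, pow_succ]
    nlinarith

lemma w_mono : Monotone w := monotone_nat_of_le_succ w_le_succ

lemma w_add_two (n : ℕ) : w (n + 2) = 2 * w n := by
  have h1 : (n+2) % 2 = n % 2 := by omega
  have h2 : (n+2)/2 = n/2 + 1 := by omega
  unfold w
  rw [h1, h2]
  split <;> ring

lemma w_add_two_mul (n j : ℕ) : w (n + 2 * j) = 2 ^ j * w n := by
  induction j with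
  | zero => simp
  | succ k ih =>
    have : n + 2 * (k+1) = (n + 2*k) + 2 := by ring
    rw [this, w_add_two, ih, pow_succ]; ring

lemma ge_of_dvd_of_lt {d a c : ℤ} (hd : 0 < d) (hdvd : d ∣ a) (h : d * c < a) :
    d * (c + 1) ≤ a := by
  obtain ⟨k, rfl⟩ := hdvd
  have : c < k := lt_of_mul_lt_mul_left h hd.le
  nlinarith

theorem stmt7 (z : GaussianInt) (hz : z ≠ 0) (n : ℕ) (hn : 1 ≤ n) (h : phi z ≤ n) :
    mm z ≤ w (n - 1) - 2 ^ (v2 z + 1) := by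
  set j := v2 z with hj
  set S := {m : ℕ | |z.re| ≤ 2 ^ j * (w m - 2) ∧ |z.im| ≤ 2 ^ j * (w m - 2)} with hS
  set N := sInf S with hNdef
  have hj1 : (1:ℤ) ≤ 2 ^ j := one_le_pow₀ (by norm_num)
  have hpowsucc : (2:ℤ) ^ (j+1) = 2 * 2 ^ j := by rw [pow_succ]; ring
  -- divisibility
  have hgcd : Int.gcd z.re z.im ≠ 0 := by
    intro hg
    rw [Int.gcd_eq_zero_iff] at hg
    obtain ⟨h1, h2⟩ := hg
    exact hz (Zsqrtd.ext (by simpa using h1) (by simpa using h2))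
  have hdvdn : (2:ℕ) ^ j ∣ Int.gcd z.re z.im := pow_padicValNat_dvd
  have hdvdg : ((2:ℤ) ^ j) ∣ (Int.gcd z.re z.im : ℤ) := by
    exact_mod_cast Int.natCast_dvd_natCast.mpr hdvdn
  have hre : (2:ℤ) ^ j ∣ |z.re| := (dvd_abs _ _).mpr (hdvdg.trans (Int.gcd_dvd_left _ _))
  have him : (2:ℤ) ^ j ∣ |z.im| := (dvd_abs _ _).mpr (hdvdg.trans (Int.gcd_dvd_right _ _))
  -- S nonempty
  have hSne : S.Nonempty := by
    set K := (linf z).toNat with hK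
    have hKK : (K:ℤ) < 2 ^ K := by exact_mod_cast (Nat.lt_two_pow_self (n := K))
    have hreK : |z.re| ≤ (K:ℤ) := le_trans (le_max_left _ _) (Int.self_le_toNat _)
    have himK : |z.im| ≤ (K:ℤ) := le_trans (le_max_right _ _) (Int.self_le_toNat _)
    have hw2K : w (2 * K) = 2 ^ K * 3 := by
      have := w_add_two_mul 0 K
      simpa [w] using this
    refine ⟨2 * K, ?_, ?_⟩ <;> · show _ ≤ _; rw [hw2K]; nlinarith
  have hNmem : N ∈ S := Nat.sInf_mem hSne
  obtain ⟨hNre, hNim⟩ := hNmem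
  have hphi : phi z = if l1 z ≤ 2 ^ j * (w (N + 1) - 3) then N + 2 * j else N + 2 * j + 1 := rfl
  rw [hphi] at h
  have hmmre : mm z ≤ |z.re| := min_le_left _ _
  have hmmim : mm z ≤ |z.im| := min_le_right _ _
  by_cases hc : l1 z ≤ 2 ^ j * (w (N + 1) - 3)
  · rw [if_pos hc] at h
    rcases Nat.eq_zero_or_pos N with hN0 | hN1
    · -- N = 0
      have hw1 : w 1 = 4 := by norm_num [w]
      rw [hN0] at hc
      rw [hw1] at hc
      have hmm0 : mm z = 0 := by
        by_contra hm
        have hpos : 0 < mm z := lt_of_le_of_ne (le_min (abs_nonneg _) (abs_nonneg _)) (Ne.symm hm)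
        have h1 : 2 ^ j ≤ |z.re| := Int.le_of_dvd (lt_of_lt_of_le hpos hmmre) hre
        have h2 : 2 ^ j ≤ |z.im| := Int.le_of_dvd (lt_of_lt_of_le hpos hmmim) him
        have : l1 z ≤ 2 ^ j * 1 := by simpa using hc
        unfold l1 at this
        linarith
      rw [hmm0]
      rcases Nat.eq_zero_or_pos j with hj0 | hj2
    -- j = 0
      · rw [hj0]
        have := w_ge_3 (n-1)
        norm_num
        linarith
      · have hle : 2*j - 1 ≤ n - 1 := by omega
        have hwval : w (2*j - 1) = 2 ^ (j+1) := by
          unfold w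
          rw [if_neg (by omega : ¬ (2*j-1) % 2 = 0), (by omega : (2*j-1)/2 = j - 1),
            (by omega : j + 1 = (j-1) + 2), pow_add]
          ring
        have := w_mono hle
        rw [hwval] at this
        linarith
    · -- N ≥ 1
      have hnot : (N - 1) ∉ S := Nat.notMem_of_lt_sInf (by omega)
      rw [hS, Set.mem_setOf_eq, not_and_or] at hnot
      have hw2 : w (N + 1) = 2 * w (N - 1) := by
        rw [(by omega : N + 1 = (N-1) + 2), w_add_two]
      have key : mm z ≤ 2 ^ j * (w (N-1) - 2) := by
        rcases hnot with hx | hx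
        · push_neg at hx
          have hge : 2 ^ j * ((w (N-1) - 2) + 1) ≤ |z.re| :=
            ge_of_dvd_of_lt (two_pow_pos j) hre hx
          have : |z.re| + |z.im| ≤ 2 ^ j * (w (N + 1) - 3) := hc
          rw [hw2] at this
          nlinarith
        · push_neg at hx
          have hge : 2 ^ j * ((w (N-1) - 2) + 1) ≤ |z.im| :=
            ge_of_dvd_of_lt (two_pow_pos j) him hx
          have : |z.re| + |z.im| ≤ 2 ^ j * (w (N + 1) - 3) := hc
          rw [hw2] at this
          nlinarith
      have hle : (N - 1) + 2*j ≤ n - 1 := by omega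
      have hmono := w_mono hle
      rw [w_add_two_mul] at hmono
      linarith [key, hmono]
  · rw [if_neg hc] at h
    have hle : N + 2*j ≤ n - 1 := by omega
    have hmono := w_mono hle
    rw [w_add_two_mul] at hmono
    linarith [hNre, hmmre, hmono]
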